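/- arXiv:2508.12834 — 2 statements merged into one kernel-verified Lean document; each statement's English description precedes it below -/
import Mathlib

section
/- Let K be a positive integer, let α, b, σ, σ₀, C be positive real numbers, and set β = 2b/(ασ²). Let L : ℝ^K → ℝ be a measurable function such that p_ss(W) = C·exp(−β·L(W)) is a probability density with respect to Lebesgue measure on ℝ^K (i.e. ∫ C·exp(−β·L(W)) dW = 1), and assume that L and W ↦ ‖W‖² are integrable with respect to the probability measure μ_ss with density p_ss. Then (1/K)·∫ L dμ_ss ≤ (ασ²/(2bK))·[ (K/2)·log(2π σ₀²) + log C + (∫ ‖W‖² dμ_ss)/(2σ₀²) ]. -/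
open MeasureTheory Real

/-- **Proposition 1.** For the quasi-steady-state Gibbs measure `μ_ss` with density
`p_ss(W) = C · exp(−β·L(W))`, `β = 2b/(ασ²)`, the averaged expected loss is bounded by
an expression in the Gaussian initialization variance `σ₀²`. -/
theorem expected_loss_KL_bound
    (K : ℕ) (hK : 0 < K) (α b σ σ₀ C : ℝ)
    (hα : 0 < α) (hb : 0 < b) (hσ : 0 < σ) (hσ₀ : 0 < σ₀) (hC : 0 < C)
    (β : ℝ) (hβ : β = 2 * b / (α * σ ^ 2))
    (L : EuclideanSpace ℝ (Fin K) → ℝ) (hL : Measurable L)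
    (μss : Measure (EuclideanSpace ℝ (Fin K)))
    (hμss : μss = volume.withDensity (fun W => ENNReal.ofReal (C * Real.exp (-β * L W))))
    (hprob : ∫⁻ W, ENNReal.ofReal (C * Real.exp (-β * L W)) = 1)
    (hLint : Integrable L μss)
    (hW2int : Integrable (fun W : EuclideanSpace ℝ (Fin K) => ‖W‖ ^ 2) μss) :
    (1 / (K : ℝ)) * ∫ W, L W ∂μss ≤
      (α * σ ^ 2 / (2 * b * K)) *
        ((K / 2) * Real.log (2 * π * σ₀ ^ 2) + Real.log C +
          (∫ W, ‖W‖ ^ 2 ∂μss) / (2 * σ₀ ^ 2)) := by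
  have hKpos : (0 : ℝ) < K := Nat.cast_pos.mpr hK
  have hβpos : 0 < β := by rw [hβ]; positivity
  set f : EuclideanSpace ℝ (Fin K) → ℝ := fun W => C * Real.exp (-β * L W) with hf_def
  have hfpos : ∀ W, 0 < f W := fun W => by positivity
  have hfmeas : Measurable f := measurable_const.mul ((hL.const_mul (-β)).exp)
  set a : ℝ := 1 / (2 * σ₀ ^ 2) with ha_def
  have hapos : 0 < a := by positivity
  have hbase : (0 : ℝ) < 2 * π * σ₀ ^ 2 := by positivity
  set c : ℝ := (2 * π * σ₀ ^ 2) ^ (-(K : ℝ) / 2) with hc_def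
  have hcpos : 0 < c := Real.rpow_pos_of_pos hbase _
  set g : EuclideanSpace ℝ (Fin K) → ℝ := fun W => c * Real.exp (-a * ‖W‖ ^ 2) with hg_def
  have hgpos : ∀ W, 0 < g W := fun W => by positivity
  -- Gaussian integrability
  have hgint0 : Integrable (fun v : EuclideanSpace ℝ (Fin K) => rexp (-a * ‖v‖ ^ 2)) := by
    have h := (GaussianFourier.integrable_cexp_neg_mul_sq_norm_add
      (V := EuclideanSpace ℝ (Fin K)) (b := (a : ℂ)) (by simpa using hapos) 0 0).norm
    simp only [Complex.norm_exp] at h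
    convert h using 2 with v
    simp [← Complex.ofReal_pow]
  have hgint : Integrable g volume := hgint0.const_mul c
  -- Gaussian integral equals 1
  have hgone : ∫ W, g W = 1 := by
    rw [hg_def]
    simp only [integral_const_mul]
    rw [GaussianFourier.integral_rexp_neg_mul_sq_norm hapos]
    have hfr : (Module.finrank ℝ (EuclideanSpace ℝ (Fin K)) : ℝ) = (K : ℝ) := by
      simp [finrank_euclideanSpace_fin]
    rw [hfr]
    have hpa : π / a = 2 * π * σ₀ ^ 2 := by
      rw [ha_def]; field_simp
    rw [hpa, hc_def, ← Real.rpow_add hbase,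
      show (-(K:ℝ)/2 + (K:ℝ)/2) = 0 by ring, Real.rpow_zero]
  -- μss is a probability measure
  have hprobmeas : IsProbabilityMeasure μss := by
    constructor
    rw [hμss, withDensity_apply _ MeasurableSet.univ, setLIntegral_univ]
    exact hprob
  -- integrability of g/f with respect to μss
  have hfENNmeas : Measurable fun W => ENNReal.ofReal (f W) :=
    ENNReal.measurable_ofReal.comp hfmeas
  have hgf_meas : Measurable fun W => g W / f W := by
    apply Measurable.div
    · exact measurable_const.mul (((measurable_norm.pow_const 2).const_mul (-a)).exp)
    · exact hfmeas
  have hgf_eq : (fun x => (g x / f x) * (ENNReal.ofReal (f x)).toReal) = g := by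
    funext x
    rw [ENNReal.toReal_ofReal (hfpos x).le, div_mul_cancel₀ _ (hfpos x).ne']
  have h_ratio_int : Integrable (fun W => g W / f W) μss := by
    rw [hμss, integrable_withDensity_iff hfENNmeas
      (ae_of_all _ fun x => ENNReal.ofReal_lt_top)]
    rw [hgf_eq]
    exact hgint
  -- ∫ g/f dμss = 1
  have h_ratio_eq : ∫ W, g W / f W ∂μss = 1 := by
    rw [hμss]
    have hrw : (fun W => ENNReal.ofReal (f W))
        = fun W => ((f W).toNNReal : ENNReal) := rfl
    rw [hrw, integral_withDensity_eq_integral_smul (hfmeas.real_toNNReal)]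
    have : (fun W => (f W).toNNReal • (g W / f W)) = g := by
      funext x
      simp only [NNReal.smul_def, Real.coe_toNNReal _ (hfpos x).le, smul_eq_mul]
      exact mul_div_cancel₀ _ (hfpos x).ne'
    rw [this, hgone]
  -- the logarithm as an explicit integrable function
  set φ : EuclideanSpace ℝ (Fin K) → ℝ :=
    fun W => (Real.log c - a * ‖W‖ ^ 2) - (Real.log C - β * L W) with hφ_def
  have hfun : (fun W => Real.log (g W / f W)) = φ := by
    funext W
    rw [hφ_def, hg_def, hf_def]
    rw [Real.log_div (hgpos W).ne' (hfpos W).ne',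
      Real.log_mul hcpos.ne' (Real.exp_pos _).ne',
      Real.log_mul hC.ne' (Real.exp_pos _).ne', Real.log_exp, Real.log_exp]
    ring
  have hA1 : Integrable (fun W : EuclideanSpace ℝ (Fin K) => a * ‖W‖ ^ 2) μss :=
    hW2int.const_mul a
  have hB1 : Integrable (fun W => β * L W) μss := hLint.const_mul β
  have hA : Integrable (fun W : EuclideanSpace ℝ (Fin K) => Real.log c - a * ‖W‖ ^ 2) μss :=
    (integrable_const _).sub hA1
  have hB : Integrable (fun W => Real.log C - β * L W) μss :=
    (integrable_const _).sub hB1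
  have hφint : Integrable φ μss := hA.sub hB
  have h_log_int : Integrable (fun W => Real.log (g W / f W)) μss := by
    rw [hfun]; exact hφint
  -- main KL-type inequality
  have h_main : ∫ W, Real.log (g W / f W) ∂μss ≤ 0 := by
    calc ∫ W, Real.log (g W / f W) ∂μss
        ≤ ∫ W, (g W / f W - 1) ∂μss := by
          apply integral_mono h_log_int (h_ratio_int.sub (integrable_const 1))
          intro W
          exact Real.log_le_sub_one_of_pos (div_pos (hgpos W) (hfpos W))
      _ = 0 := by
          rw [integral_sub h_ratio_int (integrable_const 1), h_ratio_eq,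
            integral_const]
          simp
  -- compute the integral of φ
  set I1 : ℝ := ∫ W, L W ∂μss with hI1
  set I2 : ℝ := ∫ W, ‖W‖ ^ 2 ∂μss with hI2
  have hφval : ∫ W, φ W ∂μss = (Real.log c - a * I2) - (Real.log C - β * I1) := by
    rw [hφ_def]
    rw [integral_sub hA hB, integral_sub (integrable_const _) hA1,
      integral_sub (integrable_const _) hB1,
      integral_const_mul, integral_const_mul, integral_const, integral_const]
    simp [hI1, hI2]
  have hlogc : Real.log c = (-(K : ℝ) / 2) * Real.log (2 * π * σ₀ ^ 2) := by
    rw [hc_def, Real.log_rpow hbase]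
  rw [hfun, hφval] at h_main
  have hkey : β * I1 ≤ (K / 2) * Real.log (2 * π * σ₀ ^ 2) + Real.log C + I2 / (2 * σ₀ ^ 2) := by
    rw [hlogc, ha_def] at h_main
    have h2 : (1 / (2 * σ₀ ^ 2)) * I2 = I2 / (2 * σ₀ ^ 2) := by ring
    nlinarith [h_main]
  set R : ℝ := (K / 2) * Real.log (2 * π * σ₀ ^ 2) + Real.log C + I2 / (2 * σ₀ ^ 2) with hR
  calc (1 / (K : ℝ)) * I1 = (1 / (β * K)) * (β * I1) := by
        field_simp
    _ ≤ (1 / (β * K)) * R := by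
        apply mul_le_mul_of_nonneg_left hkey
        positivity
    _ = (α * σ ^ 2 / (2 * b * K)) * R := by
        rw [hβ]
        field_simp
end

section
/- Let K be a positive integer, let α, b, σ, C be positive real numbers, and set β = 2b/(ασ²). Let L : ℝ^K → ℝ be measurable such that p_ss(W) = C·exp(−β·L(W)) is a probability density with respect to Lebesgue measure on ℝ^K, and assume L and W ↦ ‖W‖² are integrable with respect to the probability measure μ_ss with density p_ss, with A := ∫ ‖W‖² dμ_ss > 0. Then, choosing the initialization variance σ₀² = A/K (the optimal choice), one has (1/K)·∫ L dμ_ss ≤ (ασ²/(2bK))·[ (K/2)·log(2π e · A/K) + log C ]. -/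
open MeasureTheory Real

lemma aux_integrable_rexp_neg_mul_sq_norm {K : ℕ} {t : ℝ} (ht : 0 < t) :
    Integrable (fun v : EuclideanSpace ℝ (Fin K) => Real.exp (-t * ‖v‖ ^ 2)) := by
  have h := GaussianFourier.integrable_cexp_neg_mul_sq_norm_add
      (V := EuclideanSpace ℝ (Fin K)) (b := (t : ℂ)) (by simpa using ht) 0 0
  have h2 := h.norm
  refine h2.congr (Filter.Eventually.of_forall fun v => ?_)
  simp only [Complex.norm_exp]
  norm_num
  left
  norm_cast

/-- **Theorem 2.** Choosing the optimal initialization variance `σ₀² = A/K`, where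
`A = ∫ ‖W‖² dμ_ss` is the steady-state second moment, the Kullback–Leibler bound on the
averaged expected loss becomes `(ασ²/(2bK))·[(K/2)·log(2πe·A/K) + log C]`. -/
theorem expected_loss_optimal_initialization_bound
    (K : ℕ) (hK : 0 < K) (α b σ C : ℝ)
    (hα : 0 < α) (hb : 0 < b) (hσ : 0 < σ) (hC : 0 < C)
    (β : ℝ) (hβ : β = 2 * b / (α * σ ^ 2))
    (L : EuclideanSpace ℝ (Fin K) → ℝ) (hL : Measurable L)
    (μss : Measure (EuclideanSpace ℝ (Fin K)))
    (hμss : μss = volume.withDensity (fun W => ENNReal.ofReal (C * Real.exp (-β * L W))))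
    (hprob : ∫⁻ W, ENNReal.ofReal (C * Real.exp (-β * L W)) = 1)
    (hLint : Integrable L μss)
    (hW2int : Integrable (fun W : EuclideanSpace ℝ (Fin K) => ‖W‖ ^ 2) μss)
    (A : ℝ) (hA : A = ∫ W, ‖W‖ ^ 2 ∂μss) (hApos : 0 < A) :
    (1 / (K : ℝ)) * ∫ W, L W ∂μss ≤
      (α * σ ^ 2 / (2 * b * K)) *
        ((K / 2) * Real.log (2 * π * Real.exp 1 * (A / K)) + Real.log C) := by
  have hKpos : (0 : ℝ) < K := by exact_mod_cast hK
  -- the Gibbs density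
  set p : EuclideanSpace ℝ (Fin K) → ℝ := fun W => C * Real.exp (-β * L W) with hp_def
  have hp_pos : ∀ W, 0 < p W := fun W => mul_pos hC (Real.exp_pos _)
  have hp_meas : Measurable p := by
    exact measurable_const.mul ((hL.const_mul (-β)).exp)
  -- parameters of the comparison Gaussian
  set s : ℝ := A / K with hs_def
  have hs_pos : 0 < s := div_pos hApos hKpos
  set t : ℝ := 1 / (2 * s) with ht_def
  have ht_pos : 0 < t := by positivity
  set Z : ℝ := (π / t) ^ ((K : ℝ) / 2) with hZ_def
  have hZ_pos : 0 < Z := Real.rpow_pos_of_pos (by positivity) _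
  set q : EuclideanSpace ℝ (Fin K) → ℝ := fun W => Z⁻¹ * Real.exp (-t * ‖W‖ ^ 2) with hq_def
  have hq_pos : ∀ W, 0 < q W := fun W => mul_pos (inv_pos.2 hZ_pos) (Real.exp_pos _)
  have hq_meas : Measurable q :=
    measurable_const.mul (((measurable_norm.pow_const 2).const_mul (-t)).exp)
  -- Gaussian normalization
  have hq_int : Integrable q := (aux_integrable_rexp_neg_mul_sq_norm ht_pos).const_mul _
  have hq_integral : ∫ W, q W = 1 := by
    rw [hq_def]
    rw [integral_const_mul]
    have := GaussianFourier.integral_rexp_neg_mul_sq_norm (V := EuclideanSpace ℝ (Fin K)) ht_pos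
    rw [show ∫ v : EuclideanSpace ℝ (Fin K), Real.exp (-t * ‖v‖ ^ 2) = (π / t) ^ (Module.finrank ℝ (EuclideanSpace ℝ (Fin K)) / 2 : ℝ) from this]
    have hfr : (Module.finrank ℝ (EuclideanSpace ℝ (Fin K)) : ℝ) = (K : ℝ) := by
      simp [finrank_euclideanSpace]
    rw [hfr, ← hZ_def]
    field_simp
  -- μss is a probability measure
  have hμuniv : μss Set.univ = 1 := by
    rw [hμss, withDensity_apply _ MeasurableSet.univ, setLIntegral_univ, hprob]
  haveI : IsProbabilityMeasure μss := ⟨hμuniv⟩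
  -- integrability of log q and log p w.r.t. μss
  have hlogq_eq : ∀ W : EuclideanSpace ℝ (Fin K), Real.log (q W) = -Real.log Z + (-t) * ‖W‖ ^ 2 := by
    intro W
    rw [hq_def]
    rw [Real.log_mul (by positivity) (Real.exp_pos _).ne', Real.log_inv, Real.log_exp]
  have hlogp_eq : ∀ W : EuclideanSpace ℝ (Fin K), Real.log (p W) = Real.log C + (-β) * L W := by
    intro W
    rw [hp_def]
    rw [Real.log_mul hC.ne' (Real.exp_pos _).ne', Real.log_exp]
  have hlogq_int : Integrable (fun W => Real.log (q W)) μss := by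
    have : Integrable (fun W : EuclideanSpace ℝ (Fin K) => -Real.log Z + (-t) * ‖W‖ ^ 2) μss :=
      (integrable_const _).add (hW2int.const_mul _)
    exact this.congr (Filter.Eventually.of_forall fun W => (hlogq_eq W).symm)
  have hlogp_int : Integrable (fun W => Real.log (p W)) μss := by
    have : Integrable (fun W : EuclideanSpace ℝ (Fin K) => Real.log C + (-β) * L W) μss :=
      (integrable_const _).add (hLint.const_mul _)
    exact this.congr (Filter.Eventually.of_forall fun W => (hlogp_eq W).symm)
  -- the likelihood ratio g = q/p
  set g : EuclideanSpace ℝ (Fin K) → ℝ := fun W => q W / p W with hg_def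
  have hg_pos : ∀ W, 0 < g W := fun W => div_pos (hq_pos W) (hp_pos W)
  have hg_meas : Measurable g := hq_meas.div hp_meas
  have hg_lint : ∫⁻ W, ENNReal.ofReal (g W) ∂μss = 1 := by
    have hd_meas : Measurable (fun W => ENNReal.ofReal (C * Real.exp (-β * L W))) :=
      hp_meas.ennreal_ofReal
    rw [hμss, lintegral_withDensity_eq_lintegral_mul _ hd_meas (hg_meas.ennreal_ofReal)]
    have heq : ∀ W, ENNReal.ofReal (C * Real.exp (-β * L W)) * ENNReal.ofReal (g W)
        = ENNReal.ofReal (q W) := by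
      intro W
      rw [← ENNReal.ofReal_mul (hp_pos W).le]
      congr 1
      have hpne : p W ≠ 0 := (hp_pos W).ne'
      rw [hg_def]
      field_simp
    have h2 : ∫⁻ W, ((fun W => ENNReal.ofReal (C * Real.exp (-β * L W)))
        * fun W => ENNReal.ofReal (g W)) W = ∫⁻ W, ENNReal.ofReal (q W) := by
      refine lintegral_congr fun W => ?_
      simpa using heq W
    rw [h2, ← ofReal_integral_eq_lintegral_ofReal hq_int
      (Filter.Eventually.of_forall fun W => (hq_pos W).le), hq_integral, ENNReal.ofReal_one]
  have hg_int : Integrable g μss := by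
    refine ⟨hg_meas.aestronglyMeasurable, ?_⟩
    rw [hasFiniteIntegral_iff_ofReal (Filter.Eventually.of_forall fun W => (hg_pos W).le),
      hg_lint]
    exact ENNReal.one_lt_top
  have hg_integral : ∫ W, g W ∂μss = 1 := by
    rw [integral_eq_lintegral_of_nonneg_ae
      (Filter.Eventually.of_forall fun W => (hg_pos W).le) hg_meas.aestronglyMeasurable,
      hg_lint, ENNReal.toReal_one]
  -- Gibbs' inequality: ∫ log q ≤ ∫ log p
  have hkey : ∫ W, Real.log (q W) ∂μss ≤ ∫ W, Real.log (p W) ∂μss := by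
    have hmono : ∫ W, (Real.log (q W) - Real.log (p W)) ∂μss ≤ ∫ W, (g W - 1) ∂μss := by
      refine integral_mono (hlogq_int.sub hlogp_int) (hg_int.sub (integrable_const _)) ?_
      intro W
      show Real.log (q W) - Real.log (p W) ≤ g W - 1
      have h1 : Real.log (q W) - Real.log (p W) = Real.log (g W) := by
        rw [hg_def]
        exact (Real.log_div (hq_pos W).ne' (hp_pos W).ne').symm
      rw [h1]
      exact Real.log_le_sub_one_of_pos (hg_pos W)
    rw [integral_sub hlogq_int hlogp_int, integral_sub hg_int (integrable_const _),
      hg_integral, integral_const] at hmono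
    simp at hmono
    linarith
  -- evaluate both sides
  have hlogq_val : ∫ W, Real.log (q W) ∂μss = -Real.log Z + (-t) * A := by
    calc ∫ W, Real.log (q W) ∂μss
        = ∫ W, (-Real.log Z + (-t) * ‖W‖ ^ 2) ∂μss :=
          integral_congr_ae (Filter.Eventually.of_forall fun W => hlogq_eq W)
      _ = -Real.log Z + (-t) * A := by
          rw [integral_add (integrable_const _) (hW2int.const_mul _), integral_const,
            integral_const_mul, ← hA]
          simp
  have hlogp_val : ∫ W, Real.log (p W) ∂μss = Real.log C + (-β) * ∫ W, L W ∂μss := by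
    calc ∫ W, Real.log (p W) ∂μss
        = ∫ W, (Real.log C + (-β) * L W) ∂μss :=
          integral_congr_ae (Filter.Eventually.of_forall fun W => hlogp_eq W)
      _ = Real.log C + (-β) * ∫ W, L W ∂μss := by
          rw [integral_add (integrable_const _) (hLint.const_mul _), integral_const,
            integral_const_mul]
          simp
  -- compute logs
  have hZ_log : Real.log Z = ((K : ℝ) / 2) * Real.log (2 * π * s) := by
    rw [hZ_def, Real.log_rpow (by positivity)]
    congr 2
    rw [ht_def]
    field_simp
  have htA : t * A = (K : ℝ) / 2 := by
    rw [ht_def, hs_def]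
    field_simp
  have hlog_e : Real.log (2 * π * Real.exp 1 * (A / K)) = Real.log (2 * π * s) + 1 := by
    rw [← hs_def]
    rw [show 2 * π * Real.exp 1 * s = (2 * π * s) * Real.exp 1 by ring]
    rw [Real.log_mul (by positivity) (Real.exp_pos _).ne', Real.log_exp]
  -- combine: β * ∫ L ≤ log C + log Z + t * A
  have hmain : β * ∫ W, L W ∂μss ≤ Real.log C + Real.log Z + t * A := by
    rw [hlogq_val, hlogp_val] at hkey
    linarith
  -- final arithmetic
  have hβ_pos : 0 < β := by rw [hβ]; positivity
  have hc_pos : (0 : ℝ) < α * σ ^ 2 / (2 * b * K) := by positivity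
  have hRHS : ((K : ℝ) / 2) * Real.log (2 * π * Real.exp 1 * (A / K)) + Real.log C
      = Real.log C + Real.log Z + t * A := by
    rw [hlog_e, hZ_log, htA]
    ring
  rw [hRHS]
  have := mul_le_mul_of_nonneg_left hmain hc_pos.le
  calc (1 / (K : ℝ)) * ∫ W, L W ∂μss
      = (α * σ ^ 2 / (2 * b * K)) * (β * ∫ W, L W ∂μss) := by
        rw [hβ]
        field_simp
    _ ≤ (α * σ ^ 2 / (2 * b * K)) * (Real.log C + Real.log Z + t * A) := this
end
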